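/- Let G = (V,E) be a connected graph on n ≥ 5 nodes and set c(G) = max{0, (3ρ_max(G) − 4ρ_avg(G))/(1 − 4/n)}. Then the point x̃ defined by x̃_{ij} = (ρ_G(i,j) + c(G)) / ((4/n²) Σ_{1≤k<l≤n} (ρ_G(k,l) + c(G))) for all 1 ≤ i < j ≤ n satisfies: (i) x̃_{ij} ≤ x̃_{ik} + x̃_{jk} for all distinct i,j,k; (ii) x̃_{ij} + x̃_{ik} + x̃_{jk} ≤ 2 for all 1 ≤ i < j < k ≤ n; and (iii) Σ_{1≤i<j≤n} x̃_{ij} = n²/4. That is, x̃ is a feasible point of the metric LP relaxation. -/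

import Mathlib

noncomputable section
open scoped Classical

/-- The sum of `f i j` over all unordered pairs `{i, j}` with `i < j`. -/
def pairSum (n : ℕ) (f : Fin n → Fin n → ℝ) : ℝ :=
  ∑ i : Fin n, ∑ j : Fin n, if i < j then f i j else 0

/-- The diameter `ρ_max(G)` of `G`: the maximum of the shortest-path distance over
all pairs of nodes. -/
def rhoMax {n : ℕ} (G : SimpleGraph (Fin n)) : ℕ :=
  (Finset.univ : Finset (Fin n × Fin n)).sup (fun p => G.dist p.1 p.2)

/-- The average distance `ρ_avg(G) = (2/n²) ∑_{i<j} ρ_G(i,j)` of `G`. -/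
def rhoAvg (n : ℕ) (G : SimpleGraph (Fin n)) : ℝ :=
  (2 / (n : ℝ) ^ 2) * pairSum n (fun i j => (G.dist i j : ℝ))

/-- The quantity `c(G) = max {0, (3ρ_max(G) - 4ρ_avg(G)) / (1 - 4/n)}`. -/
def cConst (n : ℕ) (G : SimpleGraph (Fin n)) : ℝ :=
  max 0 ((3 * (rhoMax G : ℝ) - 4 * rhoAvg n G) / (1 - 4 / (n : ℝ)))

/-- The point `x̃` built from the shortest-path metric of `G`:
`x̃_{ij} = (ρ_G(i,j) + c(G)) / ((4/n²) ∑_{k<l} (ρ_G(k,l) + c(G)))`. -/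
def xTilde (n : ℕ) (G : SimpleGraph (Fin n)) : Fin n → Fin n → ℝ :=
  fun i j => ((G.dist i j : ℝ) + cConst n G) /
    ((4 / (n : ℝ) ^ 2) * pairSum n (fun k l => (G.dist k l : ℝ) + cConst n G))

lemma pairCount (n : ℕ) : pairSum n (fun _ _ => (1:ℝ)) = ((n:ℝ)^2 - n)/2 := by
  have hsym : pairSum n (fun _ _ => (1:ℝ)) =
      ∑ i : Fin n, ∑ j : Fin n, if j < i then (1:ℝ) else 0 := by
    rw [pairSum, Finset.sum_comm]
  have htot : (∑ i : Fin n, ∑ j : Fin n,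
      ((if i < j then (1:ℝ) else 0) + (if j < i then (1:ℝ) else 0) + (if i = j then (1:ℝ) else 0)))
      = (n:ℝ)^2 := by
    have : ∀ i j : Fin n,
        ((if i < j then (1:ℝ) else 0) + (if j < i then (1:ℝ) else 0)
          + (if i = j then (1:ℝ) else 0)) = 1 := by
      intro i j
      rcases lt_trichotomy i j with h | h | h
      · simp [h, h.ne, h.ne', asymm h]
      · simp [h]
      · simp [h, h.ne, h.ne', asymm h]
    simp [this, sq]
  have hdiag : (∑ i : Fin n, ∑ j : Fin n, if i = j then (1:ℝ) else 0) = n := by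
    simp [Finset.sum_ite_eq]
  simp only [Finset.sum_add_distrib] at htot
  rw [← hsym] at htot
  rw [hdiag] at htot
  unfold pairSum at *
  linarith

lemma pairSum_add_const (n : ℕ) (f : Fin n → Fin n → ℝ) (c : ℝ) :
    pairSum n (fun i j => f i j + c) = pairSum n f + c * (((n:ℝ)^2 - n)/2) := by
  have h : ∀ i j : Fin n, (if i < j then f i j + c else 0)
      = (if i < j then f i j else 0) + c * (if i < j then (1:ℝ) else 0) := by
    intro i j; split <;> ring
  unfold pairSum
  simp only [h, Finset.sum_add_distrib, ← Finset.mul_sum]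
  rw [← pairCount n]
  rfl

/-- Let `G` be a connected graph on `n ≥ 5` nodes.  Then the point
`x̃` satisfies the triangle inequalities, the perimeter inequalities, and the
equipartition equality constraint, i.e. it is a feasible point of the metric LP
relaxation (LP-P). -/
theorem xTilde_feasible (n : ℕ) (hn5 : 5 ≤ n)
    (G : SimpleGraph (Fin n)) (hconn : G.Connected) :
    (∀ i j k : Fin n, i ≠ j → i ≠ k → j ≠ k →
        xTilde n G i j ≤ xTilde n G i k + xTilde n G j k) ∧
    (∀ i j k : Fin n, i < j → j < k →
        xTilde n G i j + xTilde n G i k + xTilde n G j k ≤ 2) ∧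
    pairSum n (xTilde n G) = (n : ℝ) ^ 2 / 4 := by
  have hn : (5:ℝ) ≤ (n:ℝ) := by exact_mod_cast hn5
  have hn0 : (0:ℝ) < n := by linarith
  set c : ℝ := cConst n G with hcdef
  have hc : 0 ≤ c := le_max_left _ _
  set S : ℝ := pairSum n (fun k l => (G.dist k l : ℝ) + c) with hSdef
  -- positivity of S
  have hS : 0 < S := by
    set i0 : Fin n := ⟨0, by omega⟩ with hi0
    set i1 : Fin n := ⟨1, by omega⟩ with hi1
    have h0 : i0 ≠ i1 := by
      intro h
      have := congrArg Fin.val h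
      simp [hi0, hi1] at this
    have hd01 : 0 < G.dist i0 i1 := hconn.pos_dist_of_ne h0
    have hterm : ∀ i j : Fin n, 0 ≤ (if i < j then (G.dist i j : ℝ) + c else 0) := by
      intro i j; split
      · positivity
      · exact le_refl 0
    rw [hSdef, pairSum]
    apply Finset.sum_pos'
    · intro i _
      exact Finset.sum_nonneg fun j _ => hterm i j
    · refine ⟨i0, Finset.mem_univ _, ?_⟩
      have h01 : i0 < i1 := by
        rw [Fin.lt_def]; simp [hi0, hi1]
      have hpos : 0 < (if i0 < i1 then (G.dist i0 i1 : ℝ) + c else 0) := by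
        rw [if_pos h01]
        have : (1:ℝ) ≤ (G.dist i0 i1 : ℝ) := by exact_mod_cast hd01
        linarith
      exact Finset.sum_pos' (fun j _ => hterm i0 j) ⟨i1, Finset.mem_univ _, hpos⟩
  set D : ℝ := (4 / (n:ℝ)^2) * S with hDdef
  have hD : 0 < D := by
    apply mul_pos _ hS
    positivity
  have hx : ∀ i j : Fin n, xTilde n G i j = ((G.dist i j : ℝ) + c) / D := by
    intro i j; rfl
  -- distances bounded by rhoMax
  have hM : ∀ a b : Fin n, (G.dist a b : ℝ) ≤ (rhoMax G : ℝ) := by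
    intro a b
    exact_mod_cast Nat.cast_le.mpr
      (Finset.le_sup (f := fun p : Fin n × Fin n => G.dist p.1 p.2) (Finset.mem_univ (a, b)))
  -- key inequality
  have h1n : (0:ℝ) < 1 - 4 / (n:ℝ) := by
    rw [sub_pos, div_lt_one hn0]; linarith
  have hkey : 3 * (rhoMax G : ℝ) - 4 * rhoAvg n G ≤ c * (1 - 4 / (n:ℝ)) := by
    rcases le_or_gt (3 * (rhoMax G : ℝ) - 4 * rhoAvg n G) 0 with h | h
    · have : 0 ≤ c * (1 - 4 / (n:ℝ)) := mul_nonneg hc h1n.le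
      linarith
    · have hcval : c = (3 * (rhoMax G : ℝ) - 4 * rhoAvg n G) / (1 - 4 / (n:ℝ)) := by
        rw [hcdef, cConst, max_eq_right]
        positivity
      rw [hcval, div_mul_cancel₀ _ h1n.ne']
  have hSeq : S = pairSum n (fun k l => (G.dist k l : ℝ)) + c * (((n:ℝ)^2 - n)/2) :=
    pairSum_add_const n _ c
  have hid : 2 * D = 4 * rhoAvg n G + 3 * c + c * (1 - 4 / (n:ℝ)) := by
    rw [hDdef, hSeq, rhoAvg]
    field_simp
    ring
  refine ⟨?_, ?_, ?_⟩
  · -- triangle inequalities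
    intro i j k _ _ _
    rw [hx, hx, hx, ← add_div, div_le_div_iff_of_pos_right hD]
    have htri : G.dist i j ≤ G.dist i k + G.dist k j := hconn.dist_triangle
    have hcomm : G.dist k j = G.dist j k := SimpleGraph.dist_comm
    rw [hcomm] at htri
    have : (G.dist i j : ℝ) ≤ (G.dist i k : ℝ) + (G.dist j k : ℝ) := by exact_mod_cast htri
    linarith
  · -- perimeter inequalities
    intro i j k _ _
    rw [hx, hx, hx, ← add_div, ← add_div, div_le_iff₀ hD]
    have h1 := hM i j
    have h2 := hM i k
    have h3 := hM j k
    linarith [hid, hkey]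
  · -- equality constraint
    have hxe : ∀ i j : Fin n, (if i < j then xTilde n G i j else 0)
        = (if i < j then (G.dist i j : ℝ) + c else 0) / D := by
      intro i j; rw [hx]; split <;> simp
    rw [pairSum]
    simp only [hxe, ← Finset.sum_div]
    have : (∑ i : Fin n, ∑ j : Fin n, if i < j then (G.dist i j : ℝ) + c else 0) = S := rfl
    rw [this, hDdef, div_eq_iff (ne_of_gt hD)]
    have h4 : (n:ℝ)^2/4 * (4/(n:ℝ)^2) = 1 := by
      field_simp
    rw [← mul_assoc, h4, one_mul]
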